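/- For every integer p ≥ 2 and all integers 0 ≤ k < n, the number of unordered forests on [n] consisting of k p-ary labeled trees equals f(n,k) = binom(n, k) · pk · ∏_{i=1}^{n−k−1} (pn − i), where the empty product is 1; in particular f(n,0) = 0 for n > 0. -/

import Mathlib

open scoped Classical

/-- A `p`-ary labeled forest: a finite set of vertices (labels, which are
natural numbers), where each non-root vertex has a parent together with a
slot position in `Fin p` (the `p` ordered, possibly empty, child positions),
each (parent, slot) pair is occupied by at most one child, and every vertex
reaches a root (a vertex with no parent) by iterating the parent map. -/
structure PForest (p : ℕ) where
  verts : Finset ℕ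
  par : ℕ → Option (ℕ × Fin p)
  par_eq_none_of_not_mem : ∀ v, v ∉ verts → par v = none
  par_mem : ∀ v ∈ verts, ∀ w s, par v = some (w, s) → w ∈ verts
  par_inj : ∀ u ∈ verts, ∀ v ∈ verts, ∀ w s,
      par u = some (w, s) → par v = some (w, s) → u = v
  reaches_root : ∀ v ∈ verts,
      ∃ k, par ((fun x => ((par x).map Prod.fst).getD x)^[k] v) = none

namespace PForest

variable {p : ℕ}

/-- One step from a vertex towards the root (identity on roots and
non-vertices). -/
def step (T : PForest p) (v : ℕ) : ℕ := ((T.par v).map Prod.fst).getD v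

/-- The roots of the forest: vertices with no parent. -/
def roots (T : PForest p) : Finset ℕ := T.verts.filter (fun v => T.par v = none)

/-- `v` belongs to the maximal decreasing subtree `MD(T)`: every edge on the
path from `v` up to its root goes from a smaller label (child) to a larger
label (parent). -/
def InMD (T : PForest p) (v : ℕ) : Prop :=
  v ∈ T.verts ∧ ∀ k w s, T.par (T.step^[k] v) = some (w, s) → T.step^[k] v < w

/-- The vertex set of the maximal decreasing subtree `MD(T)`. -/
noncomputable def mdSet (T : PForest p) : Finset ℕ :=
  T.verts.filter (fun v => T.InMD v)

/-- `T` is a `p`-ary labeled tree on `[n] = {1, …, n}`: its vertex set is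
`{1, …, n}` and it has exactly one root (and no root when `n = 0`, i.e. the
empty tree). -/
def IsTreeOn (T : PForest p) (n : ℕ) : Prop :=
  T.verts = Finset.Icc 1 n ∧ T.roots.card = min n 1

/-- `v` is a leaf of `T`: it has no children. -/
def IsLeaf (T : PForest p) (v : ℕ) : Prop := ∀ u s, T.par u ≠ some (v, s)

end PForest

namespace PForest

variable {p : ℕ}

-- basic lemmas
lemma step_of_par_none {T : PForest p} {v : ℕ} (h : T.par v = none) : T.step v = v := by
  simp [step, h]

lemma step_of_par_some {T : PForest p} {v : ℕ} {w : ℕ} {s : Fin p}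
    (h : T.par v = some (w, s)) : T.step v = w := by
  simp [step, h]

lemma step_mem {T : PForest p} {v : ℕ} (hv : v ∈ T.verts) : T.step v ∈ T.verts := by
  rcases h : T.par v with _ | ⟨w, s⟩
  · rw [step_of_par_none h]; exact hv
  · rw [step_of_par_some h]; exact T.par_mem v hv w s h

lemma iterate_step_mem {T : PForest p} {v : ℕ} (hv : v ∈ T.verts) (j : ℕ) :
    T.step^[j] v ∈ T.verts := by
  induction j with
  | zero => exact hv
  | succ j ih => rw [Function.iterate_succ_apply']; exact step_mem ih

lemma exists_root {T : PForest p} {v : ℕ} (hv : v ∈ T.verts) :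
    ∃ k, T.par (T.step^[k] v) = none := T.reaches_root v hv

noncomputable def rootOf (T : PForest p) (v : ℕ) : ℕ :=
  if h : ∃ k, T.par (T.step^[k] v) = none then T.step^[Nat.find h] v else v

lemma iterate_step_stable {T : PForest p} {v : ℕ} (h : T.par v = none) (j : ℕ) :
    T.step^[j] v = v := by
  induction j with
  | zero => rfl
  | succ j ih => rw [Function.iterate_succ_apply, step_of_par_none h, ih]

lemma rootOf_eq {T : PForest p} {v : ℕ} {j : ℕ} (h : T.par (T.step^[j] v) = none) :
    T.rootOf v = T.step^[j] v := by
  have hex : ∃ k, T.par (T.step^[k] v) = none := ⟨j, h⟩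
  rw [rootOf, dif_pos hex]
  have hle : Nat.find hex ≤ j := Nat.find_le h
  have hspec := Nat.find_spec hex
  have : T.step^[j] v = T.step^[j - Nat.find hex] (T.step^[Nat.find hex] v) := by
    rw [← Function.iterate_add_apply, Nat.sub_add_cancel hle]
  rw [this, iterate_step_stable hspec]

lemma par_rootOf {T : PForest p} {v : ℕ} (h : ∃ k, T.par (T.step^[k] v) = none) :
    T.par (T.rootOf v) = none := by
  obtain ⟨j, hj⟩ := h
  rw [rootOf_eq hj]
  -- need: par at step^[j] v is none... but rootOf_eq gives rootOf = step^[j] v with that property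
  exact hj

lemma rootOf_mem_roots {T : PForest p} {v : ℕ} (hv : v ∈ T.verts) :
    T.rootOf v ∈ T.roots := by
  obtain ⟨j, hj⟩ := exists_root hv
  rw [roots, Finset.mem_filter, rootOf_eq hj]
  exact ⟨iterate_step_mem hv j, hj⟩

lemma rootOf_of_par_none {T : PForest p} {v : ℕ} (h : T.par v = none) : T.rootOf v = v :=
  rootOf_eq (j := 0) h

/-- if the path from u hits a root v, then v is the root of u -/
lemma rootOf_eq_of_hit {T : PForest p} {u v : ℕ} {j : ℕ} (hj : T.step^[j] u = v)
    (hv : T.par v = none) : T.rootOf u = v := by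
  have : T.par (T.step^[j] u) = none := by rw [hj]; exact hv
  rw [rootOf_eq this, hj]

lemma path_ne_of_rootOf_ne {T : PForest p} {u v : ℕ} (hv : T.par v = none)
    (hne : T.rootOf u ≠ v) (j : ℕ) : T.step^[j] u ≠ v := fun h => hne (rootOf_eq_of_hit h hv)

/-- no nontrivial cycle through a vertex -/
lemma no_cycle {T : PForest p} {v : ℕ} (hv : v ∈ T.verts) (hp : T.par v ≠ none) (j : ℕ) :
    T.step^[j + 1] v ≠ v := by
  intro hcyc
  obtain ⟨i, hi⟩ := exists_root hv
  -- step^[m*(j+1)] v = v for all m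
  have hper : ∀ m, T.step^[m * (j + 1)] v = v := by
    intro m
    induction m with
    | zero => simp
    | succ m ih => rw [Nat.succ_mul, Function.iterate_add_apply, hcyc, ih]
  have hbig : T.step^[i * (j + 1)] v = v := hper i
  have hige : i ≤ i * (j + 1) := Nat.le_mul_of_pos_right i (Nat.succ_pos j)
  have : T.step^[i * (j + 1)] v = T.step^[i * (j + 1) - i] (T.step^[i] v) := by
    rw [← Function.iterate_add_apply, Nat.sub_add_cancel hige]
  rw [this, iterate_step_stable hi] at hbig
  -- hbig : T.step^[i] v = v, but par (step^[i] v) = none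
  rw [hbig] at hi
  exact hp hi


lemma pforest_ext {T T' : PForest p} (h1 : T.verts = T'.verts) (h2 : T.par = T'.par) :
    T = T' := by
  cases T; cases T'; simp_all

lemma step_congr {T T' : PForest p} {x : ℕ} (h : T'.par x = T.par x) :
    T'.step x = T.step x := by
  simp [step, h]

lemma iterate_step_congr {T T' : PForest p} {u : ℕ} {n : ℕ}
    (h : ∀ j < n, T'.par (T.step^[j] u) = T.par (T.step^[j] u)) :
    T'.step^[n] u = T.step^[n] u := by
  induction n with
  | zero => rfl
  | succ n ih =>
      rw [Function.iterate_succ_apply', Function.iterate_succ_apply',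
        ih (fun j hj => h j (Nat.lt_succ_of_lt hj))]
      exact step_congr (h n (Nat.lt_succ_self n))

lemma rootOf_congr {T T' : PForest p} {u : ℕ}
    (h : ∀ j, T'.par (T.step^[j] u) = T.par (T.step^[j] u))
    (hu : ∃ k, T.par (T.step^[k] u) = none) :
    T'.rootOf u = T.rootOf u := by
  obtain ⟨i, hi⟩ := hu
  have hiter : T'.step^[i] u = T.step^[i] u := iterate_step_congr (fun j _ => h j)
  have hi' : T'.par (T'.step^[i] u) = none := by rw [hiter, h i]; exact hi
  rw [rootOf_eq hi', rootOf_eq hi, hiter]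

/-- Cut the edge above `v`, making `v` a root. -/
def cut (T : PForest p) (v : ℕ) : PForest p where
  verts := T.verts
  par := fun u => if u = v then none else T.par u
  par_eq_none_of_not_mem := by
    intro u hu
    by_cases h : u = v
    · simp [h]
    · simp [h, T.par_eq_none_of_not_mem u hu]
  par_mem := by
    intro u hu w s hw
    by_cases h : u = v
    · simp [h] at hw
    · simp only [if_neg h] at hw
      exact T.par_mem u hu w s hw
  par_inj := by
    intro u hu u' hu' w s h1 h2
    by_cases h : u = v
    · simp [h] at h1
    · by_cases h' : u' = v
      · simp [h'] at h2
      · simp only [if_neg h, if_neg h'] at h1 h2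
        exact T.par_inj u hu u' hu' w s h1 h2
  reaches_root := by
    intro u hu
    show ∃ k, _ = none
    -- key claim by strong recursion on the length of the old path
    suffices H : ∀ i u, T.par (T.step^[i] u) = none →
        ∃ k, (if ((fun x => ((((fun u => if u = v then none else T.par u) x)).map Prod.fst).getD x)^[k] u) = v then none else T.par ((fun x => ((((fun u => if u = v then none else T.par u) x)).map Prod.fst).getD x)^[k] u)) = none by
      obtain ⟨i, hi⟩ := exists_root hu
      exact H i u hi
    intro i
    induction i with
    | zero =>
        intro u hu0
        simp only [Function.iterate_zero_apply] at hu0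
        exact ⟨0, by by_cases h : u = v <;> simp [h, hu0]⟩
    | succ i ih =>
        intro u hu0
        by_cases h : u = v
        · exact ⟨0, by simp [h]⟩
        · rcases hpar : T.par u with _ | ⟨w, s⟩
          · exact ⟨0, by simp [h, hpar]⟩
          · obtain ⟨k, hk⟩ := ih (T.step u) (by
              rwa [← Function.iterate_succ_apply])
            refine ⟨k + 1, ?_⟩
            have hstep1 : ((((fun u => if u = v then none else T.par u) u)).map Prod.fst).getD u = T.step u := by
              simp only [if_neg h]; rfl
            rw [Function.iterate_succ_apply]
            rw [hstep1]
            exact hk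


def stepFn (f : ℕ → Option (ℕ × Fin p)) (x : ℕ) : ℕ := ((f x).map Prod.fst).getD x

lemma step_eq_stepFn (T : PForest p) : T.step = stepFn T.par := rfl

@[simp] lemma cut_verts (T : PForest p) (v : ℕ) : (cut T v).verts = T.verts := rfl

lemma cut_par (T : PForest p) (v u : ℕ) :
    (cut T v).par u = if u = v then none else T.par u := rfl

/-- Attach root `v` as a child of `w` in the free slot `s`. -/
def link (T : PForest p) (v w : ℕ) (s : Fin p) (hvm : v ∈ T.verts) (hv : T.par v = none)
    (hw : w ∈ T.verts) (hfree : ∀ u, T.par u ≠ some (w, s)) (hroot : T.rootOf w ≠ v) :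
    PForest p where
  verts := T.verts
  par := fun u => if u = v then some (w, s) else T.par u
  par_eq_none_of_not_mem := by
    intro u hu
    have : u ≠ v := fun h => hu (h ▸ hvm)
    simp [this, T.par_eq_none_of_not_mem u hu]
  par_mem := by
    intro u hu w' s' hw'
    by_cases h : u = v
    · simp only [if_pos h, Option.some_inj, Prod.mk.injEq] at hw'
      rw [← hw'.1]
      exact hw
    · simp only [if_neg h] at hw'
      exact T.par_mem u hu w' s' hw'
  par_inj := by
    intro u hu u' hu' w' s' h1 h2
    by_cases h : u = v
    · by_cases h' : u' = v
      · rw [h, h']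
      · simp only [if_pos h, Option.some_inj] at h1
        simp only [if_neg h'] at h2
        rw [← h1] at h2
        exact absurd h2 (hfree u')
    · by_cases h' : u' = v
      · simp only [if_pos h', Option.some_inj] at h2
        simp only [if_neg h] at h1
        rw [← h2] at h1
        exact absurd h1 (hfree u)
      · simp only [if_neg h] at h1
        simp only [if_neg h'] at h2
        exact T.par_inj u hu u' hu' w' s' h1 h2
  reaches_root := by
    intro u hu
    set f := fun u => if u = v then some (w, s) else T.par u with hf
    show ∃ k, f ((stepFn f)^[k] u) = none
    -- stepFn f agrees with T.step away from v
    have hstep : ∀ x, x ≠ v → stepFn f x = T.step x := by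
      intro x hx
      simp only [stepFn, hf, if_neg hx]
      rfl
    have hprefix : ∀ (u0 : ℕ) (m : ℕ), (∀ j, j < m → T.step^[j] u0 ≠ v) →
        (stepFn f)^[m] u0 = T.step^[m] u0 := by
      intro u0 m
      induction m with
      | zero => intro _; rfl
      | succ m ih =>
          intro hm
          rw [Function.iterate_succ_apply', Function.iterate_succ_apply',
            ih (fun j hj => hm j (Nat.lt_succ_of_lt hj))]
          exact hstep _ (hm m (Nat.lt_succ_self m))
    -- the path of w in T avoids v
    have hwavoid : ∀ j, T.step^[j] w ≠ v := path_ne_of_rootOf_ne hv hroot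
    have hwiter : ∀ j, (stepFn f)^[j] w = T.step^[j] w := by
      intro j
      exact hprefix w j (fun j' _ => hwavoid j')
    by_cases hcase : T.rootOf u = v
    · -- the path of u hits v; continue through w
      obtain ⟨i, hi⟩ := exists_root hu
      have hit : T.step^[i] u = v := by rw [← rootOf_eq hi, hcase]
      have hexhit : ∃ j, T.step^[j] u = v := ⟨i, hit⟩
      set j0 := Nat.find hexhit with hj0
      have hj0v : T.step^[j0] u = v := Nat.find_spec hexhit
      have hj0min : ∀ j, j < j0 → T.step^[j] u ≠ v := fun j hj => Nat.find_min hexhit hj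
      have h1 : (stepFn f)^[j0] u = v := by rw [hprefix u j0 hj0min, hj0v]
      have h2 : stepFn f v = w := by simp [stepFn, hf]
      obtain ⟨mw, hmw⟩ := exists_root hw
      refine ⟨mw + (1 + j0), ?_⟩
      rw [Function.iterate_add_apply, Function.iterate_add_apply,
        Function.iterate_one, h1, h2, hwiter mw]
      have : T.step^[mw] w ≠ v := hwavoid mw
      simp only [hf, if_neg this]
      exact hmw
    · -- the path of u avoids v
      have huavoid : ∀ j, T.step^[j] u ≠ v := path_ne_of_rootOf_ne hv hcase
      obtain ⟨i, hi⟩ := exists_root hu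
      refine ⟨i, ?_⟩
      rw [hprefix u i (fun j _ => huavoid j)]
      simp only [hf, if_neg (huavoid i)]
      exact hi

@[simp] lemma link_verts (T : PForest p) (v w : ℕ) (s : Fin p) (h1 h2 h3 h4 h5) :
    (link T v w s h1 h2 h3 h4 h5).verts = T.verts := rfl

lemma link_par (T : PForest p) (v w : ℕ) (s : Fin p) (h1 h2 h3 h4 h5) (u : ℕ) :
    (link T v w s h1 h2 h3 h4 h5).par u = if u = v then some (w, s) else T.par u := rfl

lemma roots_cut (T : PForest p) (v : ℕ) (hv : v ∈ T.verts) :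
    (cut T v).roots = insert v T.roots := by
  ext u
  simp only [roots, cut_verts, Finset.mem_filter, Finset.mem_insert, cut_par]
  by_cases h : u = v
  · simp [h, hv]
  · simp [h]

lemma roots_link (T : PForest p) (v w : ℕ) (s : Fin p) (h1 h2 h3 h4 h5) :
    (link T v w s h1 h2 h3 h4 h5).roots = T.roots.erase v := by
  ext u
  rw [roots, roots, Finset.mem_filter, Finset.mem_erase, Finset.mem_filter, link_verts, link_par]
  by_cases h : u = v
  · simp [h]
  · simp [h, and_comm]


/-- forests with a fixed vertex set form a finite type -/
lemma finite_fixed_verts (S : Finset ℕ) : Finite {T : PForest p // T.verts = S} := by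
  classical
  let Φ : {T : PForest p // T.verts = S} → ({x // x ∈ S} → Option ({x // x ∈ S} × Fin p)) :=
    fun T v => (T.1.par v.1).attach.map
      (fun x => (⟨x.1.1, by
        have hv : (v : ℕ) ∈ T.1.verts := by rw [T.2]; exact v.2
        have hx : T.1.par v.1 = some (x.1.1, x.1.2) := x.2
        have hm := T.1.par_mem v.1 hv x.1.1 x.1.2 hx
        rwa [T.2] at hm⟩, x.1.2))
  have hΦ : Function.Injective Φ := by
    intro T T' h
    have hpar : T.1.par = T'.1.par := by
      funext u
      by_cases hu : u ∈ S
      · have := congrFun h ⟨u, hu⟩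
        have h1 := congrArg (Option.map (fun y : {x // x ∈ S} × Fin p => ((y.1 : ℕ), y.2))) this
        simpa [Φ, Option.map_map, Function.comp_def] using h1
      · rw [T.1.par_eq_none_of_not_mem u (by rw [T.2]; exact hu),
          T'.1.par_eq_none_of_not_mem u (by rw [T'.2]; exact hu)]
    exact Subtype.ext (pforest_ext (T.2.trans T'.2.symm) hpar)
  exact Finite.of_injective Φ hΦ

lemma finite_sub (S : Finset ℕ) (P : PForest p → Prop) :
    Finite {T : PForest p // T.verts = S ∧ P T} := by
  have := finite_fixed_verts (p := p) S
  exact Finite.of_injective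
    (fun T => (⟨T.1, T.2.1⟩ : {T : PForest p // T.verts = S}))
    (fun a b h => Subtype.ext (by simpa using congrArg Subtype.val h))

/-- the finset of free slots of a forest -/
noncomputable def freeS (T : PForest p) : Finset (ℕ × Fin p) :=
  (T.verts ×ˢ Finset.univ).filter (fun ws => ∀ u, T.par u ≠ some ws)

lemma mem_freeS {T : PForest p} {w : ℕ} {s : Fin p} :
    (w, s) ∈ T.freeS ↔ w ∈ T.verts ∧ ∀ u, T.par u ≠ some (w, s) := by
  simp [freeS]

lemma nonroots_card (T : PForest p) :
    (T.verts.filter (fun v => T.par v ≠ none)).card = T.verts.card - T.roots.card := by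
  classical
  have h := Finset.card_filter_add_card_filter_not
    (s := T.verts) (p := fun v => T.par v = none)
  rw [roots]
  simp only [ne_eq] at h ⊢
  omega

lemma card_freeS (T : PForest p) :
    T.freeS.card = T.verts.card * p - (T.verts.card - T.roots.card) := by
  classical
  set nr : Finset ℕ := T.verts.filter (fun v => T.par v ≠ none) with hnr
  have hmem_nr : ∀ {v : ℕ}, v ∈ nr ↔ v ∈ T.verts ∧ T.par v ≠ none := by
    intro v; simp [hnr]
  set occ : Finset (ℕ × Fin p) := nr.attach.image
    (fun v => (T.par v.1).get (by
      rw [Option.isSome_iff_ne_none]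
      exact (hmem_nr.1 v.2).2)) with hocc
  have hpar_get : ∀ (v : {x // x ∈ nr}),
      T.par v.1 = some ((T.par v.1).get (Option.isSome_iff_ne_none.2 (hmem_nr.1 v.2).2)) := by
    intro v
    exact (Option.some_get _).symm
  have hinj : Function.Injective (fun v : {x // x ∈ nr} => (T.par v.1).get (by
      rw [Option.isSome_iff_ne_none]
      exact (hmem_nr.1 v.2).2)) := by
    intro v v' h
    have h1 := hpar_get v
    have h2 := hpar_get v'
    simp only [h] at h1
    apply Subtype.ext
    exact T.par_inj v.1 (hmem_nr.1 v.2).1 v'.1 (hmem_nr.1 v'.2).1 _ _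
      (by exact h1) (by exact h2)
  have hocc_card : occ.card = nr.card := by
    rw [hocc, Finset.card_image_of_injective _ hinj, Finset.card_attach]
  have hocc_mem : ∀ {ws : ℕ × Fin p}, ws ∈ occ ↔ ∃ u, T.par u = some ws := by
    intro ws
    constructor
    · rintro h
      rw [hocc, Finset.mem_image] at h
      obtain ⟨v, _, hv⟩ := h
      exact ⟨v.1, by rw [hpar_get v, hv]⟩
    · rintro ⟨u, hu⟩
      have hu_nr : u ∈ nr := by
        rw [hmem_nr]
        constructor
        · by_contra hmem
          rw [T.par_eq_none_of_not_mem u hmem] at hu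
          exact nomatch hu
        · rw [hu]; exact Option.some_ne_none _
      rw [hocc, Finset.mem_image]
      refine ⟨⟨u, hu_nr⟩, Finset.mem_attach _ _, ?_⟩
      have := hpar_get ⟨u, hu_nr⟩
      simp only [hu, Option.some_inj] at this ⊢
      exact this.symm
  have hsub : occ ⊆ T.verts ×ˢ Finset.univ := by
    intro ws hws
    obtain ⟨u, hu⟩ := hocc_mem.1 hws
    have hu_verts : u ∈ T.verts := by
      by_contra hmem
      rw [T.par_eq_none_of_not_mem u hmem] at hu
      exact nomatch hu
    rw [Finset.mem_product]
    exact ⟨T.par_mem u hu_verts ws.1 ws.2 (by rwa [← Prod.mk.eta (p := ws)] at hu),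
      Finset.mem_univ _⟩
  have hfree : T.freeS = (T.verts ×ˢ Finset.univ) \ occ := by
    ext ws
    rw [freeS, Finset.mem_filter, Finset.mem_sdiff]
    constructor
    · rintro ⟨h1, h2⟩
      refine ⟨h1, fun hc => ?_⟩
      obtain ⟨u, hu⟩ := hocc_mem.1 hc
      exact h2 u hu
    · rintro ⟨h1, h2⟩
      refine ⟨h1, fun u hu => h2 (hocc_mem.2 ⟨u, hu⟩)⟩
  rw [hfree, Finset.card_sdiff_of_subset hsub, Finset.card_product, Finset.card_univ,
    Fintype.card_fin, hocc_card, hnr, nonroots_card]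


lemma card_sigma_const {ι : Type*} (β : ι → Type*) [Finite ι] [∀ i, Finite (β i)] (c : ℕ)
    (h : ∀ i, Nat.card (β i) = c) : Nat.card ((i : ι) × β i) = Nat.card ι * c := by
  classical
  cases nonempty_fintype ι
  haveI : ∀ i, Fintype (β i) := fun i => Fintype.ofFinite _
  rw [Nat.card_eq_fintype_card, Fintype.card_sigma, Nat.card_eq_fintype_card]
  have : ∀ i : ι, Fintype.card (β i) = c := by
    intro i
    rw [← Nat.card_eq_fintype_card, h]
  simp only [this, Finset.sum_const, smul_eq_mul, Finset.card_univ]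

lemma sigma_subtype_eq' {ι : Type} {α : Type} {P : ι → α → Prop} {i j : ι} {a b : α}
    (h : i = j) (hab : a = b) (ha : P i a) (hb : P j b) :
    (⟨i, ⟨a, ha⟩⟩ : (i : ι) × {x // P i x}) = ⟨j, ⟨b, hb⟩⟩ := by
  subst h; subst hab; rfl

lemma mem_freeS' {T : PForest p} {ws : ℕ × Fin p} :
    ws ∈ T.freeS ↔ ws.1 ∈ T.verts ∧ ∀ u, T.par u ≠ some ws := by
  rw [freeS, Finset.mem_filter, Finset.mem_product]
  simp

lemma mem_roots {T : PForest p} {v : ℕ} : v ∈ T.roots ↔ v ∈ T.verts ∧ T.par v = none := by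
  rw [roots, Finset.mem_filter]

section Bij

variable (p n k : ℕ)

/-- The cut map sending (forest with k trees, non-root vertex v) to
(forest with k+1 trees, freed slot, new root v). -/
noncomputable def cutMap :
    ((T : {T : PForest p // T.verts = Finset.Icc 1 n ∧ T.roots.card = k}) ×
      {v : ℕ // v ∈ T.1.verts ∧ T.1.par v ≠ none}) →
    ((T : {T : PForest p // T.verts = Finset.Icc 1 n ∧ T.roots.card = k + 1}) ×
      {x : (ℕ × Fin p) × ℕ // x.1 ∈ T.1.freeS ∧ x.2 ∈ T.1.roots.erase (T.1.rootOf x.1.1)}) :=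
  fun x =>
  have T := x.1.1
  have hv : x.2.1 ∈ x.1.1.verts := x.2.2.1
  have hp : x.1.1.par x.2.1 ≠ none := x.2.2.2
  have hsome : (x.1.1.par x.2.1).isSome := Option.isSome_iff_ne_none.2 hp
  have hpar : x.1.1.par x.2.1 = some ((x.1.1.par x.2.1).get hsome) := (Option.some_get hsome).symm
  have hwmem : ((x.1.1.par x.2.1).get hsome).1 ∈ x.1.1.verts :=
    x.1.1.par_mem x.2.1 hv _ _ hpar
  have hvnr : x.2.1 ∉ x.1.1.roots := fun hc => hp (mem_roots.1 hc).2
  -- path of the parent avoids v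
  have havoid : ∀ j, x.1.1.step^[j] ((x.1.1.par x.2.1).get hsome).1 ≠ x.2.1 := by
    intro j
    have hstep : x.1.1.step x.2.1 = ((x.1.1.par x.2.1).get hsome).1 := step_of_par_some hpar
    rw [← hstep, ← Function.iterate_succ_apply]
    exact no_cycle hv hp j
  have hparcongr : ∀ j, (cut x.1.1 x.2.1).par (x.1.1.step^[j] ((x.1.1.par x.2.1).get hsome).1)
      = x.1.1.par (x.1.1.step^[j] ((x.1.1.par x.2.1).get hsome).1) := by
    intro j
    rw [cut_par, if_neg (havoid j)]
  have hroot_eq : (cut x.1.1 x.2.1).rootOf ((x.1.1.par x.2.1).get hsome).1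
      = x.1.1.rootOf ((x.1.1.par x.2.1).get hsome).1 :=
    rootOf_congr hparcongr (exists_root hwmem)
  have hroot_ne : x.1.1.rootOf ((x.1.1.par x.2.1).get hsome).1 ≠ x.2.1 := by
    obtain ⟨i, hi⟩ := exists_root hwmem
    rw [rootOf_eq hi]
    exact havoid i
  ⟨⟨cut x.1.1 x.2.1, by
      constructor
      · exact x.1.2.1
      · rw [roots_cut _ _ hv, Finset.card_insert_of_notMem hvnr, x.1.2.2]⟩,
   ⟨((x.1.1.par x.2.1).get hsome, x.2.1), by
      constructor
      · rw [mem_freeS']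
        refine ⟨hwmem, fun u hu => ?_⟩
        rw [cut_par] at hu
        by_cases h : u = x.2.1
        · rw [if_pos h] at hu; exact nomatch hu
        · rw [if_neg h] at hu
          have humem : u ∈ x.1.1.verts := by
            by_contra hmem
            rw [x.1.1.par_eq_none_of_not_mem u hmem] at hu
            exact nomatch hu
          exact h (x.1.1.par_inj u humem x.2.1 hv _ _ hu hpar)
      · dsimp only
        rw [Finset.mem_erase, roots_cut _ _ hv]
        refine ⟨?_, Finset.mem_insert_self _ _⟩
        rw [hroot_eq]
        exact fun hc => hroot_ne hc.symm⟩⟩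

/-- The link map, inverse to `cutMap`. -/
noncomputable def linkMap :
    ((T : {T : PForest p // T.verts = Finset.Icc 1 n ∧ T.roots.card = k + 1}) ×
      {x : (ℕ × Fin p) × ℕ // x.1 ∈ T.1.freeS ∧ x.2 ∈ T.1.roots.erase (T.1.rootOf x.1.1)}) →
    ((T : {T : PForest p // T.verts = Finset.Icc 1 n ∧ T.roots.card = k}) ×
      {v : ℕ // v ∈ T.1.verts ∧ T.1.par v ≠ none}) :=
  fun y =>
  have hfree := mem_freeS'.1 y.2.2.1
  have herase := Finset.mem_erase.1 y.2.2.2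
  have hroots := mem_roots.1 herase.2
  have hfr : ∀ u, y.1.1.par u ≠ some (y.2.1.1.1, y.2.1.1.2) := by
    intro u
    rw [Prod.mk.eta]
    exact hfree.2 u
  have hrne : y.1.1.rootOf y.2.1.1.1 ≠ y.2.1.2 := fun hc => herase.1 hc.symm
  ⟨⟨link y.1.1 y.2.1.2 y.2.1.1.1 y.2.1.1.2 hroots.1 hroots.2 hfree.1 hfr hrne, by
      constructor
      · exact y.1.2.1
      · rw [roots_link, Finset.card_erase_of_mem herase.2, y.1.2.2]
        omega⟩,
   ⟨y.2.1.2, by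
      refine ⟨hroots.1, ?_⟩
      rw [link_par, if_pos rfl]
      exact Option.some_ne_none _⟩⟩

end Bij


section Bij2

variable (p n k : ℕ)

lemma linkMap_cutMap : Function.LeftInverse (linkMap p n k) (cutMap p n k) := by
  rintro ⟨⟨T, hT⟩, ⟨v, hv1, hv2⟩⟩
  simp only [cutMap, linkMap]
  have hTT : ∀ w s (hps : T.par v = some (w, s)) (h1 h2 h3 h4 h5),
      link (cut T v) v w s h1 h2 h3 h4 h5 = T := by
    intro w s hps h1 h2 h3 h4 h5
    refine pforest_ext rfl ?_
    funext u
    rw [link_par, cut_par]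
    by_cases h : u = v
    · rw [if_pos h, h, hps]
    · rw [if_neg h, if_neg h]
  refine @sigma_subtype_eq' _ _
    (fun (T : {T : PForest p // T.verts = Finset.Icc 1 n ∧ T.roots.card = k}) (v : ℕ) =>
      v ∈ T.1.verts ∧ T.1.par v ≠ none) _ _ _ _ ?_ rfl _ _
  apply Subtype.ext
  dsimp only
  refine hTT _ _ ?_ _ _ _ _ _
  rw [Prod.mk.eta, Option.some_get]

lemma cutMap_linkMap : Function.RightInverse (linkMap p n k) (cutMap p n k) := by
  rintro ⟨⟨T, hT⟩, ⟨⟨⟨w, s⟩, v⟩, hy1, hy2⟩⟩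
  simp only [cutMap, linkMap]
  have hvroot : T.par v = none := (mem_roots.1 (Finset.mem_of_mem_erase hy2)).2
  have hTT : ∀ (h1 h2 h3 h4 h5), cut (link T v w s h1 h2 h3 h4 h5) v = T := by
    intro h1 h2 h3 h4 h5
    refine pforest_ext rfl ?_
    funext u
    rw [cut_par, link_par]
    by_cases h : u = v
    · rw [if_pos h, h, hvroot]
    · rw [if_neg h, if_neg h]
  have hget : ∀ (h1 h2 h3 h4 h5) (hs : ((link T v w s h1 h2 h3 h4 h5).par v).isSome),
      ((link T v w s h1 h2 h3 h4 h5).par v).get hs = (w, s) := by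
    intro h1 h2 h3 h4 h5 hs
    have hpv : (link T v w s h1 h2 h3 h4 h5).par v = some (w, s) := by
      rw [link_par, if_pos rfl]
    exact Option.some_inj.1 ((Option.some_get hs).trans hpv)
  refine @sigma_subtype_eq' _ _
    (fun (T : {T : PForest p // T.verts = Finset.Icc 1 n ∧ T.roots.card = k + 1})
        (x : (ℕ × Fin p) × ℕ) =>
      x.1 ∈ T.1.freeS ∧ x.2 ∈ T.1.roots.erase (T.1.rootOf x.1.1)) _ _ _ _ ?_ ?_ _ _
  · apply Subtype.ext
    dsimp only
    exact hTT _ _ _ _ _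
  · rw [hget]

noncomputable def cutEquiv :
    ((T : {T : PForest p // T.verts = Finset.Icc 1 n ∧ T.roots.card = k}) ×
      {v : ℕ // v ∈ T.1.verts ∧ T.1.par v ≠ none}) ≃
    ((T : {T : PForest p // T.verts = Finset.Icc 1 n ∧ T.roots.card = k + 1}) ×
      {x : (ℕ × Fin p) × ℕ // x.1 ∈ T.1.freeS ∧ x.2 ∈ T.1.roots.erase (T.1.rootOf x.1.1)}) :=
  ⟨cutMap p n k, linkMap p n k, linkMap_cutMap p n k, cutMap_linkMap p n k⟩

lemma card_rec :
    Nat.card {T : PForest p // T.verts = Finset.Icc 1 n ∧ T.roots.card = k} * (n - k) =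
    Nat.card {T : PForest p // T.verts = Finset.Icc 1 n ∧ T.roots.card = k + 1} *
      ((n * p - (n - (k + 1))) * k) := by
  classical
  haveI hF1 : Finite {T : PForest p // T.verts = Finset.Icc 1 n ∧ T.roots.card = k} :=
    finite_sub _ _
  haveI hF2 : Finite {T : PForest p // T.verts = Finset.Icc 1 n ∧ T.roots.card = k + 1} :=
    finite_sub _ _
  have hIcc : (Finset.Icc 1 n).card = n := by rw [Nat.card_Icc]; omega
  haveI hf1 : ∀ T : {T : PForest p // T.verts = Finset.Icc 1 n ∧ T.roots.card = k},
      Finite {v : ℕ // v ∈ T.1.verts ∧ T.1.par v ≠ none} := by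
    intro T
    exact Finite.of_injective
      (fun a => (⟨a.1, a.2.1⟩ : {v // v ∈ T.1.verts}))
      (fun a b h => Subtype.ext (by simpa using congrArg Subtype.val h))
  haveI hf2 : ∀ T : {T : PForest p // T.verts = Finset.Icc 1 n ∧ T.roots.card = k + 1},
      Finite {x : (ℕ × Fin p) × ℕ // x.1 ∈ T.1.freeS ∧ x.2 ∈ T.1.roots.erase (T.1.rootOf x.1.1)} := by
    intro T
    exact Finite.of_injective
      (fun a => ((⟨a.1.1, a.2.1⟩ : {ws // ws ∈ T.1.freeS}),
        (⟨a.1.2, Finset.mem_of_mem_erase a.2.2⟩ : {r // r ∈ T.1.roots})))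
      (fun a b h => by
        apply Subtype.ext
        have h1 := congrArg (fun z => (z.1 : ℕ × Fin p)) h
        have h2 := congrArg (fun z => (z.2 : ℕ)) h
        simp only at h1 h2
        exact Prod.ext h1 h2)
  have hL : Nat.card ((T : {T : PForest p // T.verts = Finset.Icc 1 n ∧ T.roots.card = k}) ×
      {v : ℕ // v ∈ T.1.verts ∧ T.1.par v ≠ none}) =
      Nat.card {T : PForest p // T.verts = Finset.Icc 1 n ∧ T.roots.card = k} * (n - k) := by
    refine card_sigma_const _ (n - k) ?_
    intro T
    have e : {v : ℕ // v ∈ T.1.verts ∧ T.1.par v ≠ none} ≃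
        {v : ℕ // v ∈ T.1.verts.filter (fun v => T.1.par v ≠ none)} :=
      Equiv.subtypeEquivRight (by intro v; simp [Finset.mem_filter])
    rw [Nat.card_congr e, Nat.card_eq_finsetCard, nonroots_card, T.2.1, hIcc, T.2.2]
  have hR : Nat.card ((T : {T : PForest p // T.verts = Finset.Icc 1 n ∧ T.roots.card = k + 1}) ×
      {x : (ℕ × Fin p) × ℕ // x.1 ∈ T.1.freeS ∧ x.2 ∈ T.1.roots.erase (T.1.rootOf x.1.1)}) =
      Nat.card {T : PForest p // T.verts = Finset.Icc 1 n ∧ T.roots.card = k + 1} *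
        ((n * p - (n - (k + 1))) * k) := by
    refine card_sigma_const _ _ ?_
    intro T
    -- split as a sigma over free slots
    have e : {x : (ℕ × Fin p) × ℕ // x.1 ∈ T.1.freeS ∧ x.2 ∈ T.1.roots.erase (T.1.rootOf x.1.1)} ≃
        ((ws : {ws // ws ∈ T.1.freeS}) × {r : ℕ // r ∈ T.1.roots.erase (T.1.rootOf ws.1.1)}) :=
      { toFun := fun a => ⟨⟨a.1.1, a.2.1⟩, ⟨a.1.2, a.2.2⟩⟩
        invFun := fun b => ⟨(b.1.1, b.2.1), b.1.2, b.2.2⟩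
        left_inv := fun a => rfl
        right_inv := fun b => rfl }
    rw [Nat.card_congr e]
    haveI : ∀ ws : {ws // ws ∈ T.1.freeS},
        Finite {r : ℕ // r ∈ T.1.roots.erase (T.1.rootOf ws.1.1)} := by
      intro ws
      exact Finite.of_injective
        (fun a => (⟨a.1, a.2⟩ : {r // r ∈ T.1.roots.erase (T.1.rootOf ws.1.1)}))
        (fun a b h => Subtype.ext (by simpa using congrArg Subtype.val h))
    have hcs := card_sigma_const
      (fun ws : {ws // ws ∈ T.1.freeS} =>
        {r : ℕ // r ∈ T.1.roots.erase (T.1.rootOf ws.1.1)}) k ?_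
    · rw [hcs, Nat.card_eq_finsetCard, card_freeS, T.2.1, hIcc, T.2.2]
    · intro ws
      have hwm : ws.1.1 ∈ T.1.verts := (mem_freeS'.1 ws.2).1
      rw [Nat.card_eq_finsetCard,
        Finset.card_erase_of_mem (rootOf_mem_roots hwm), T.2.2]
      omega
  rw [← hL, ← hR]
  exact Nat.card_congr (cutEquiv p n k)

end Bij2


lemma card_base (p n : ℕ) :
    Nat.card {T : PForest p // T.verts = Finset.Icc 1 n ∧ T.roots.card = n} = 1 := by
  classical
  have hIcc : (Finset.Icc 1 n).card = n := by rw [Nat.card_Icc]; omega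
  rw [Nat.card_eq_one_iff_unique]
  constructor
  · constructor
    intro a b
    have key : ∀ T : PForest p, T.verts = Finset.Icc 1 n → T.roots.card = n →
        ∀ u, T.par u = none := by
      intro T h1 h2 u
      by_cases hu : u ∈ T.verts
      · have hsub : T.roots ⊆ T.verts := Finset.filter_subset _ _
        have hcard : T.verts.card ≤ T.roots.card := by rw [h2, h1, hIcc]
        have := Finset.eq_of_subset_of_card_le hsub hcard
        rw [← this] at hu
        exact (mem_roots.1 hu).2
      · exact T.par_eq_none_of_not_mem u hu
    apply Subtype.ext
    refine pforest_ext (a.2.1.trans b.2.1.symm) ?_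
    funext u
    rw [key a.1 a.2.1 a.2.2 u, key b.1 b.2.1 b.2.2 u]
  · refine ⟨⟨⟨Finset.Icc 1 n, fun _ => none, fun _ _ => rfl, ?_, ?_, ?_⟩, rfl, ?_⟩⟩
    · intro v _ w s h
      exact nomatch h
    · intro u _ v _ w s h
      exact nomatch h
    · intro v _
      exact ⟨0, rfl⟩
    · rw [roots]
      show (Finset.filter (fun v => none = (none : Option (ℕ × Fin p))) (Finset.Icc 1 n)).card = n
      rw [Finset.filter_true_of_mem (fun _ _ => rfl), hIcc]


end PForest

/-- `t(n,k)`: the number of `p`-ary labeled trees on `[n]` whose maximal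
decreasing subtree has exactly `k` vertices. -/
noncomputable def t (p n k : ℕ) : ℕ :=
  Nat.card {T : PForest p // T.IsTreeOn n ∧ T.mdSet.card = k}

/-- `y(n,k)`: the number of `p`-ary labeled trees on `[n]` whose maximal
decreasing subtree has exactly `k` vertices and all of whose remaining
`n - k` vertices are (increasing) leaves; equivalently, trees obtained by
attaching `n - k` increasing leaves to a decreasing tree with `k` vertices. -/
noncomputable def y (p n k : ℕ) : ℕ :=
  Nat.card {T : PForest p // T.IsTreeOn n ∧ T.mdSet.card = k ∧
    ∀ v ∈ T.verts, ¬ T.InMD v → T.IsLeaf v}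

/-- `f(n,k)`: the number of (unordered) forests on `[n]` consisting of `k`
`p`-ary labeled trees. -/
noncomputable def f (p n k : ℕ) : ℕ :=
  Nat.card {T : PForest p // T.verts = Finset.Icc 1 n ∧ T.roots.card = k}

/-- For `0 ≤ k < n`, the number of unordered forests on `[n]` of `k` `p`-ary
labeled trees equals `binom(n,k) · pk · ∏_{i=1}^{n-k-1} (pn - i)`. -/
theorem stmt7 (p n k : ℕ) (hp : 2 ≤ p) (hkn : k < n) :
    f p n k = n.choose k * (p * k) * ∏ i ∈ Finset.Icc 1 (n - k - 1), (p * n - i) := by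
  have f_rec : ∀ k' : ℕ, f p n k' * (n - k') =
      f p n (k' + 1) * ((n * p - (n - (k' + 1))) * k') := fun k' => PForest.card_rec p n k'
  have f_base : f p n n = 1 := PForest.card_base p n
  have main : ∀ d k', 1 ≤ d → k' + d = n →
      f p n k' = n.choose k' * (p * k') * ∏ i ∈ Finset.Icc 1 (n - k' - 1), (p * n - i) := by
    intro d
    induction d with
    | zero => intro k' h1 _; exact absurd h1 (by omega)
    | succ d ih =>
        intro k' _ hkd
        rcases Nat.eq_zero_or_pos d with hd | hd
        · -- k' + 1 = n
          have hk1 : k' + 1 = n := by omega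
          have hrec := f_rec k'
          rw [hk1, f_base, one_mul, Nat.sub_self, Nat.sub_zero,
            show n - k' = 1 by omega, mul_one] at hrec
          rw [show n - k' - 1 = 0 by omega, Finset.Icc_eq_empty (by omega),
            Finset.prod_empty, mul_one, hrec,
            show n.choose k' = n by rw [← hk1, Nat.choose_succ_self_right, hk1],
            mul_comm n p, mul_comm (p * n) k', mul_comm p n]
          ring
        · -- inductive step
          have hk1n := ih (k' + 1) (by omega) (by omega)
          have hrec := f_rec k'
          have hnk : 0 < n - k' := by omega
          apply Nat.eq_of_mul_eq_mul_right hnk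
          rw [hrec, hk1n]
          have hm : n - k' - 1 = (n - k' - 2) + 1 := by omega
          have hm2 : n - (k' + 1) - 1 = n - k' - 2 := by omega
          have hm3 : n - (k' + 1) = (n - k' - 2) + 1 := by omega
          rw [hm, hm2, hm3, Finset.prod_Icc_succ_top (by omega), mul_comm n p]
          have hch := Nat.choose_succ_right_eq n k'
          set C1 := n.choose k'
          set C2 := n.choose (k' + 1)
          set P := ∏ i ∈ Finset.Icc 1 (n - k' - 2), (p * n - i)
          set q := p * n - (n - k' - 2 + 1)
          set r := n - k'
          calc C2 * (p * (k' + 1)) * P * (q * k')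
              = (C2 * (k' + 1)) * (p * P * q * k') := by ring
            _ = (C1 * r) * (p * P * q * k') := by rw [hch]
            _ = C1 * (p * k') * (P * q) * r := by ring
  exact main (n - k) k (by omega) (by omega)
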